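/- Let (λ_k)_{k≥1} satisfy λ_k > 0 for all k, set Λ_n = ∑_{k=1}^n λ_k, and suppose M = sup_{n≥1} (Λ_n/λ_n)·log((Λ_{n+1}/λ_{n+1})/(Λ_n/λ_n)) is finite. Let μ > e^M and let (Ω_k)_{k≥1} be a sequence of positive reals with Ω_1 = 1/μ such that for every k ≥ 1 with 0 < Ω_k < Λ_k/λ_k, the recursion Ω_{k+1}^{Λ_{k+1}} = μ^{−λ_{k+1}} · ( Ω_k·Λ_k / ( λ_{k+1}·(Λ_k/λ_k − Ω_k) ) )^{Λ_k} holds. Then for every k ≥ 1 one has Ω_k < (Λ_k/λ_k)/(Λ_{k+1}/λ_{k+1}); in particular 0 < Ω_k < Λ_k/λ_k for all k, so the recursion is well defined. -/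

import Mathlib

/-- Inequality (2.3): if `μ > e^M`, the sequence `Ω_k` defined by `Ω_1 = 1/μ`
and the recursion (2.2) satisfies `Ω_k < (Λ_k/λ_k)/(Λ_{k+1}/λ_{k+1})` for all
`k ≥ 1`; in particular `0 < Ω_k < Λ_k/λ_k`, so the recursion is well defined. -/
theorem Omega_bound
    (lam : ℕ → ℝ) (hlam : ∀ k ≥ 1, 0 < lam k)
    (Lam : ℕ → ℝ) (hLam : ∀ n, Lam n = ∑ k ∈ Finset.Icc 1 n, lam k)
    (M : ℝ)
    (hM : IsLUB {x : ℝ | ∃ n ≥ 1, x = (Lam n / lam n) *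
        Real.log ((Lam (n + 1) / lam (n + 1)) / (Lam n / lam n))} M)
    (μ : ℝ) (hμ : Real.exp M < μ)
    (Ω : ℕ → ℝ) (hΩpos : ∀ k ≥ 1, 0 < Ω k) (hΩ1 : Ω 1 = 1 / μ)
    (hrec : ∀ k ≥ 1, 0 < Ω k → Ω k < Lam k / lam k →
      Ω (k + 1) ^ Lam (k + 1) =
        μ ^ (-lam (k + 1)) *
          (Ω k * Lam k / (lam (k + 1) * (Lam k / lam k - Ω k))) ^ Lam k) :
    ∀ k ≥ 1, Ω k < (Lam k / lam k) / (Lam (k + 1) / lam (k + 1)) := by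
  have hLsucc : ∀ n, Lam (n + 1) = Lam n + lam (n + 1) := by
    intro n
    rw [hLam, hLam, Finset.sum_Icc_succ_top (by omega : 1 ≤ n + 1)]
  have hLpos : ∀ n ≥ 1, 0 < Lam n := by
    intro n hn
    rw [hLam]
    apply Finset.sum_pos
    · intro i hi; exact hlam i (Finset.mem_Icc.mp hi).1
    · exact ⟨1, Finset.mem_Icc.mpr ⟨le_refl 1, hn⟩⟩
  have hq1 : ∀ n ≥ 1, 1 < Lam (n + 1) / lam (n + 1) := by
    intro n hn
    rw [hLsucc, lt_div_iff₀ (hlam (n + 1) (by omega)), one_mul]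
    linarith [hLpos n hn]
  have hqpos : ∀ n ≥ 1, 0 < Lam n / lam n := fun n hn =>
    div_pos (hLpos n hn) (hlam n hn)
  have hMub : ∀ n ≥ 1, (Lam n / lam n) *
      Real.log ((Lam (n + 1) / lam (n + 1)) / (Lam n / lam n)) ≤ M :=
    fun n hn => hM.1 ⟨n, hn, rfl⟩
  have hμpos : 0 < μ := lt_trans (Real.exp_pos M) hμ
  have hlogμ : M < Real.log μ := (Real.lt_log_iff_exp_lt hμpos).mpr hμ
  have hLam1 : Lam 1 = lam 1 := by rw [hLam]; simp
  intro k hk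
  induction k, hk using Nat.le_induction with
  | base =>
    have hq2 : 1 < Lam 2 / lam 2 := hq1 1 le_rfl
    have h1 : Real.log (Lam 2 / lam 2) ≤ M := by
      have := hMub 1 le_rfl
      rw [hLam1, div_self (ne_of_gt (hlam 1 le_rfl)), one_mul, div_one] at this
      exact this
    have h2 : Lam 2 / lam 2 < μ := by
      calc Lam 2 / lam 2 = Real.exp (Real.log (Lam 2 / lam 2)) :=
            (Real.exp_log (by linarith)).symm
        _ ≤ Real.exp M := Real.exp_le_exp.mpr h1
        _ < μ := hμ
    rw [hΩ1, hLam1, div_self (ne_of_gt (hlam 1 le_rfl))]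
    show 1 / μ < 1 / (Lam 2 / lam 2)
    exact one_div_lt_one_div_of_lt (by linarith) h2
  | succ k hk IH =>
    set qk := Lam k / lam k with hqk
    set qk1 := Lam (k + 1) / lam (k + 1) with hqk1
    set qk2 := Lam (k + 2) / lam (k + 2) with hqk2
    have hqk_pos : 0 < qk := hqpos k hk
    have hqk1_gt : 1 < qk1 := hq1 k hk
    have hqk2_gt : 1 < qk2 := hq1 (k + 1) (by omega)
    have hlamk1 : 0 < lam (k + 1) := hlam (k + 1) (by omega)
    have hlamk2 : 0 < lam (k + 2) := hlam (k + 2) (by omega)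
    have hLk : 0 < Lam k := hLpos k hk
    have hLk1 : 0 < Lam (k + 1) := hLpos (k + 1) (by omega)
    have hΩk_pos : 0 < Ω k := hΩpos k hk
    have hIH : Ω k < qk / qk1 := IH
    have hΩk_lt : Ω k < qk := by
      have : qk / qk1 < qk := by
        rw [div_lt_iff₀ (by linarith)]; nlinarith
      linarith
    -- recursion applies
    have hr := hrec k hk hΩk_pos hΩk_lt
    -- the inner ratio is < 1
    have hden_pos : 0 < lam (k + 1) * (qk - Ω k) := by
      apply mul_pos hlamk1; linarith
    have hA_lt : Ω k * Lam k / (lam (k + 1) * (qk - Ω k)) < 1 := by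
      rw [div_lt_one hden_pos]
      -- Ω k * Λ k < λ_{k+1} (q_k - Ω k)  ⟺  Ω k Λ_{k+1} < λ_{k+1} q_k
      have h1 : Ω k * qk1 < qk := by
        rw [← lt_div_iff₀ (by linarith)] ; exact hIH
      have hq1eq : qk1 * lam (k + 1) = Lam (k + 1) := by
        rw [hqk1]; field_simp
      have h2 : Ω k * Lam (k + 1) < qk * lam (k + 1) := by
        calc Ω k * Lam (k + 1) = (Ω k * qk1) * lam (k + 1) := by
              rw [mul_assoc, hq1eq]
          _ < qk * lam (k + 1) := by
              exact mul_lt_mul_of_pos_right h1 hlamk1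
      rw [hLsucc k] at h2
      nlinarith
    have hA_pos : 0 < Ω k * Lam k / (lam (k + 1) * (qk - Ω k)) :=
      div_pos (mul_pos hΩk_pos hLk) hden_pos
    have hApow_lt : (Ω k * Lam k / (lam (k + 1) * (qk - Ω k))) ^ Lam k < 1 :=
      Real.rpow_lt_one (le_of_lt hA_pos) hA_lt hLk
    have hμpow_pos : (0:ℝ) < μ ^ (-lam (k + 1)) := Real.rpow_pos_of_pos hμpos _
    have hstep1 : Ω (k + 1) ^ Lam (k + 1) < μ ^ (-lam (k + 1)) := by
      rw [hr]
      nlinarith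
    -- now μ^{-λ_{k+1}} < (q_{k+1}/q_{k+2})^{Λ_{k+1}}
    have hr_pos : 0 < qk1 / qk2 := div_pos (by linarith) (by linarith)
    have hkey : Lam (k + 1) * Real.log (qk2 / qk1) < lam (k + 1) * Real.log μ := by
      have h1 : qk1 * Real.log (qk2 / qk1) ≤ M := hMub (k + 1) (by omega)
      have h2 : Lam (k + 1) = lam (k + 1) * qk1 := by rw [hqk1]; field_simp
      calc Lam (k + 1) * Real.log (qk2 / qk1)
          = lam (k + 1) * (qk1 * Real.log (qk2 / qk1)) := by rw [h2]; ring
        _ ≤ lam (k + 1) * M := by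
            exact mul_le_mul_of_nonneg_left h1 (le_of_lt hlamk1)
        _ < lam (k + 1) * Real.log μ := by
            exact mul_lt_mul_of_pos_left hlogμ hlamk1
    have hstep2 : μ ^ (-lam (k + 1)) < (qk1 / qk2) ^ Lam (k + 1) := by
      rw [Real.rpow_def_of_pos hμpos, Real.rpow_def_of_pos hr_pos]
      apply Real.exp_lt_exp.mpr
      have hlogr : Real.log (qk1 / qk2) = -Real.log (qk2 / qk1) := by
        rw [← Real.log_inv, inv_div]
      rw [hlogr]
      nlinarith
    have hfin : Ω (k + 1) ^ Lam (k + 1) < (qk1 / qk2) ^ Lam (k + 1) :=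
      lt_trans hstep1 hstep2
    by_contra hcon
    push_neg at hcon
    have : (qk1 / qk2) ^ Lam (k + 1) ≤ Ω (k + 1) ^ Lam (k + 1) :=
      Real.rpow_le_rpow (le_of_lt hr_pos) hcon (le_of_lt hLk1)
    linarith
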